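/- Let A, B ∈ L(H) with R(A+B) closed and A *≤ (A+B) (star order: A*A = A*(A+B) and AA* = (A+B)A*). Then (A+B)† = A† + B†. -/

import Mathlib

open ContinuousLinearMap

/-- `S` is the Moore–Penrose inverse of `T`. -/
def IsMoorePenroseInverse {H : Type*} [NormedAddCommGroup H] [InnerProductSpace ℂ H]
    [CompleteSpace H] (T S : H →L[ℂ] H) : Prop :=
  T ∘L S ∘L T = T ∧ S ∘L T ∘L S = S ∧
    IsSelfAdjoint (T ∘L S) ∧ IsSelfAdjoint (S ∘L T)

/-- Uniqueness of the Moore–Penrose inverse. -/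
lemma mp_unique {H : Type*} [NormedAddCommGroup H] [InnerProductSpace ℂ H]
    [CompleteSpace H] (T S₁ S₂ : H →L[ℂ] H)
    (h₁ : IsMoorePenroseInverse T S₁) (h₂ : IsMoorePenroseInverse T S₂) : S₁ = S₂ := by
  obtain ⟨a1, b1, c1, d1⟩ := h₁
  obtain ⟨a2, b2, c2, d2⟩ := h₂
  simp only [← ContinuousLinearMap.mul_def] at a1 b1 c1 d1 a2 b2 c2 d2
  have c1' : star (T * S₁) = T * S₁ := c1
  have c2' : star (T * S₂) = T * S₂ := c2
  have d1' : star (S₁ * T) = S₁ * T := d1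
  have d2' : star (S₂ * T) = S₂ * T := d2
  have key1 : T * S₁ = T * S₂ := by
    calc T * S₁ = star (T * S₁) := c1'.symm
      _ = star ((T * (S₂ * T)) * S₁) := by rw [a2]
      _ = star (T * S₁) * star (T * S₂) := by simp only [star_mul]; noncomm_ring
      _ = (T * S₁) * (T * S₂) := by rw [c1', c2']
      _ = (T * (S₁ * T)) * S₂ := by noncomm_ring
      _ = T * S₂ := by rw [a1]
  have key2 : S₁ * T = S₂ * T := by
    calc S₁ * T = star (S₁ * T) := d1'.symm
      _ = star (S₁ * (T * (S₂ * T))) := by rw [a2]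
      _ = star (S₂ * T) * star (S₁ * T) := by simp only [star_mul]; noncomm_ring
      _ = (S₂ * T) * (S₁ * T) := by rw [d1', d2']
      _ = S₂ * (T * (S₁ * T)) := by noncomm_ring
      _ = S₂ * T := by rw [a1]
  calc S₁ = S₁ * (T * S₁) := b1.symm
    _ = S₁ * (T * S₂) := by rw [key1]
    _ = (S₁ * T) * S₂ := by noncomm_ring
    _ = (S₂ * T) * S₂ := by rw [key2]
    _ = S₂ * (T * S₂) := by noncomm_ring
    _ = S₂ := b2

theorem stmt_18 {H : Type*} [NormedAddCommGroup H] [InnerProductSpace ℂ H]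
    [CompleteSpace H] (A B Ad Bd ABd : H →L[ℂ] H)
    (hclosed : IsClosed ((LinearMap.range ((A + B : H →L[ℂ] H) : H →ₗ[ℂ] H) : Submodule ℂ H) : Set H))
    (hstar1 : adjoint A ∘L A = adjoint A ∘L (A + B))
    (hstar2 : A ∘L adjoint A = (A + B) ∘L adjoint A)
    (hAd : IsMoorePenroseInverse A Ad) (hBd : IsMoorePenroseInverse B Bd)
    (hABd : IsMoorePenroseInverse (A + B) ABd) :
    ABd = Ad + Bd := by
  obtain ⟨hA1, hA2, hA3, hA4⟩ := hAd
  obtain ⟨hB1, hB2, hB3, hB4⟩ := hBd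
  simp only [← ContinuousLinearMap.mul_def, ← ContinuousLinearMap.star_eq_adjoint] at hstar1 hstar2 hA1 hA2 hA3 hA4 hB1 hB2 hB3 hB4
  have hA3' : star (A * Ad) = A * Ad := hA3
  have hA4' : star (Ad * A) = Ad * A := hA4
  have hB3' : star (B * Bd) = B * Bd := hB3
  have hB4' : star (Bd * B) = Bd * B := hB4
  -- orthogonality relations from the star order
  have h1 : star A * B = 0 := by
    rw [mul_add] at hstar1
    exact (left_eq_add.mp hstar1)
  have h2 : B * star A = 0 := by
    rw [add_mul] at hstar2
    exact (left_eq_add.mp hstar2)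
  have h3 : A * star B = 0 := by
    have := congrArg star h2
    simpa [star_mul] using this
  have h4 : star B * A = 0 := by
    have := congrArg star h1
    simpa [star_mul] using this
  -- consequences for the MP inverses
  have hAdB : Ad * B = 0 := by
    have e : Ad = Ad * (star Ad * star A) := by
      conv_lhs => rw [← hA2, ← hA3', star_mul]
    rw [e]
    simp [mul_assoc, h1]
  have hBAd : B * Ad = 0 := by
    have e : Ad = (star A * star Ad) * Ad := by
      conv_lhs => rw [← hA2, ← mul_assoc, ← hA4', star_mul]
    rw [e]
    simp [← mul_assoc, h2]
  have hBdA : Bd * A = 0 := by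
    have e : Bd = Bd * (star Bd * star B) := by
      conv_lhs => rw [← hB2, ← hB3', star_mul]
    rw [e]
    simp [mul_assoc, h4]
  have hABd0 : A * Bd = 0 := by
    have e : Bd = (star B * star Bd) * Bd := by
      conv_lhs => rw [← hB2, ← mul_assoc, ← hB4', star_mul]
    rw [e]
    simp [← mul_assoc, h3]
  -- `Ad + Bd` is a MP inverse of `A + B`
  have hTS : (A + B) * (Ad + Bd) = A * Ad + B * Bd := by
    rw [add_mul, mul_add, mul_add, hABd0, hBAd]
    abel
  have hST : (Ad + Bd) * (A + B) = Ad * A + Bd * B := by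
    rw [add_mul, mul_add, mul_add, hAdB, hBdA]
    abel
  have hMP : IsMoorePenroseInverse (A + B) (Ad + Bd) := by
    refine ⟨?_, ?_, ?_, ?_⟩ <;>
      simp only [← ContinuousLinearMap.mul_def]
    · have e1 : B * (Ad * A) = 0 := by rw [← mul_assoc, hBAd, zero_mul]
      have e2 : A * (Bd * B) = 0 := by rw [← mul_assoc, hABd0, zero_mul]
      simp [mul_add, add_mul, mul_assoc, hAdB, hBdA, hA1, hB1, e1, e2]
    · have e1 : Bd * (A * Ad) = 0 := by rw [← mul_assoc, hBdA, zero_mul]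
      have e2 : Ad * (B * Bd) = 0 := by rw [← mul_assoc, hAdB, zero_mul]
      simp [mul_add, add_mul, mul_assoc, hABd0, hBAd, hA2, hB2, e1, e2]
    · show star ((A + B) * (Ad + Bd)) = (A + B) * (Ad + Bd)
      rw [hTS]
      simp [star_add, hA3', hB3']
    · show star ((Ad + Bd) * (A + B)) = (Ad + Bd) * (A + B)
      rw [hST]
      simp [star_add, hA4', hB4']
  exact mp_unique (A + B) ABd (Ad + Bd) hABd hMP
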